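/- arXiv:2302.00737 — 4 statements merged into one kernel-verified Lean document; each statement's English description precedes it below -/
import Mathlib

section
/- Full tracker correctness (Lemma 'mainlemma', abstract form): for every finite trace t : List Label, the tracker meta-configuration equals the set of endpoints of atomic paths exhibiting that trace, i.e. Track t = Endpoints t. -/
universe u v

/-- Atomic paths: `HasTrace step s t s'` means there is a path from `s` to `s'`
whose observable events (labels of non-silent steps) spell out `t`. -/
inductive HasTrace {State : Type u} {Label : Type v}
    (step : State → Option Label → State → Prop) : State → List Label → State → Prop
  | refl (s : State) : HasTrace step s [] s
  | silent {s s₁ s' : State} {t : List Label} :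
      step s none s₁ → HasTrace step s₁ t s' → HasTrace step s t s'
  | event {s s₁ s' : State} {l : Label} {t : List Label} :
      step s (some l) s₁ → HasTrace step s₁ t s' → HasTrace step s (l :: t) s'

/-- Endpoints of atomic paths from `s0` exhibiting trace `t`. -/
def Endpoints {State : Type u} {Label : Type v}
    (step : State → Option Label → State → Prop) (s0 : State) (t : List Label) :
    Set State :=
  { s' | HasTrace step s0 t s' }

/-- Closure of a set of states under silent (linearization) steps. -/
def silentClosure {State : Type u} {Label : Type v}
    (step : State → Option Label → State → Prop) (M : Set State) : Set State :=
  { s' | ∃ s ∈ M, Relation.ReflTransGen (fun a b => step a none b) s s' }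

/-- Successors of a set of states under the observable event `l`. -/
def eventImage {State : Type u} {Label : Type v}
    (step : State → Option Label → State → Prop) (l : Label) (M : Set State) : Set State :=
  { s' | ∃ s ∈ M, step s (some l) s' }

/-- Auxiliary: the full tracker, recursing on the reversed trace. -/
def TrackRev {State : Type u} {Label : Type v}
    (step : State → Option Label → State → Prop) (s0 : State) :
    List Label → Set State
  | [] => silentClosure step {s0}
  | l :: t => silentClosure step (eventImage step l (TrackRev step s0 t))

/-- The full tracker meta-configuration: `Track [] = silentClosure {s0}` and
`Track (t ++ [l]) = silentClosure (eventImage l (Track t))`. -/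
def Track {State : Type u} {Label : Type v}
    (step : State → Option Label → State → Prop) (s0 : State) (t : List Label) :
    Set State :=
  TrackRev step s0 t.reverse


section Aux
variable {State : Type u} {Label : Type v} {step : State → Option Label → State → Prop}

lemma hasTrace_of_rtg {s s' s'' : State} {t : List Label}
    (h : Relation.ReflTransGen (fun a b => step a none b) s s')
    (h2 : HasTrace step s' t s'') : HasTrace step s t s'' := by
  induction h using Relation.ReflTransGen.head_induction_on with
  | refl => exact h2
  | head hstep _ ih => exact .silent hstep ih

lemma hasTrace_trans {s m s' : State} {t1 t2 : List Label}
    (h1 : HasTrace step s t1 m) (h2 : HasTrace step m t2 s') :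
    HasTrace step s (t1 ++ t2) s' := by
  induction h1 with
  | refl => exact h2
  | silent hs _ ih => exact .silent hs (ih h2)
  | event hs _ ih => exact .event hs (ih h2)

lemma aux_nil {s s' : State} {t : List Label} (h : HasTrace step s t s') (ht : t = []) :
    Relation.ReflTransGen (fun a b => step a none b) s s' := by
  induction h with
  | refl => exact .refl
  | silent hs _ ih => exact .head hs (ih ht)
  | event => simp at ht

lemma aux_append {s s' : State} {t : List Label} (h : HasTrace step s t s') :
    ∀ t1 t2, t = t1 ++ t2 → ∃ m, HasTrace step s t1 m ∧ HasTrace step m t2 s' := by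
  induction h with
  | refl s =>
    intro t1 t2 ht
    obtain ⟨h1, h2⟩ := List.append_eq_nil_iff.mp ht.symm
    subst h1; subst h2
    exact ⟨s, .refl s, .refl s⟩
  | silent hs _ ih =>
    intro t1 t2 ht
    obtain ⟨m, h1, h2⟩ := ih t1 t2 ht
    exact ⟨m, .silent hs h1, h2⟩
  | @event s s₁ s' l t hs h' ih =>
    intro t1 t2 ht
    cases t1 with
    | nil =>
      simp only [List.nil_append] at ht
      exact ⟨s, .refl s, ht ▸ .event hs h'⟩
    | cons a t1' =>
      simp only [List.cons_append, List.cons.injEq] at ht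
      obtain ⟨rfl, ht⟩ := ht
      obtain ⟨m, h1, h2⟩ := ih t1' t2 ht
      exact ⟨m, .event hs h1, h2⟩

lemma aux_single {s s' : State} {t : List Label} (h : HasTrace step s t s') :
    ∀ l, t = [l] → ∃ m1 m2, Relation.ReflTransGen (fun a b => step a none b) s m1 ∧
      step m1 (some l) m2 ∧ Relation.ReflTransGen (fun a b => step a none b) m2 s' := by
  induction h with
  | refl => intro l ht; simp at ht
  | silent hs _ ih =>
    intro l ht
    obtain ⟨m1, m2, a, b, c⟩ := ih l ht
    exact ⟨m1, m2, .head hs a, b, c⟩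
  | @event s s₁ s' l' t hs h' _ =>
    intro l ht
    simp only [List.cons.injEq] at ht
    obtain ⟨rfl, rfl⟩ := ht
    exact ⟨s, s₁, .refl, hs, aux_nil h' rfl⟩

end Aux

/-- Full tracker correctness (main lemma):
`Track t = Endpoints t` for every finite trace `t`. -/
theorem track_eq_endpoints {State : Type u} {Label : Type v}
    (step : State → Option Label → State → Prop) (s0 : State) :
    ∀ t : List Label, Track step s0 t = Endpoints step s0 t := by
  intro t
  induction t using List.reverseRecOn with
  | nil =>
    ext s'
    simp only [Track, TrackRev, List.reverse_nil, silentClosure, Endpoints,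
      Set.mem_setOf_eq, Set.mem_singleton_iff]
    constructor
    · rintro ⟨s, rfl, h⟩
      exact hasTrace_of_rtg h (.refl s')
    · intro h
      exact ⟨s0, rfl, aux_nil h rfl⟩
  | append_singleton t l ih =>
    ext s'
    have : Track step s0 (t ++ [l]) =
        silentClosure step (eventImage step l (Track step s0 t)) := by
      simp [Track, TrackRev]
    rw [this, ih]
    simp only [silentClosure, eventImage, Endpoints, Set.mem_setOf_eq]
    constructor
    · rintro ⟨m2, ⟨m1, h1, h2⟩, h3⟩
      exact hasTrace_trans h1 (.event h2 (hasTrace_of_rtg h3 (.refl s')))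
    · intro h
      obtain ⟨m, h1, h2⟩ := aux_append h t [l] rfl
      obtain ⟨m1, m2, a, b, c⟩ := aux_single h2 l rfl
      have hm1 : HasTrace step s0 t m1 := by
        have := hasTrace_trans h1 (hasTrace_of_rtg a (.refl m1))
        simpa using this
      exact ⟨m2, ⟨m1, hm1, b⟩, c⟩
end

section
/- Main theorem (abstract form): for any set T of finite traces (the behaviors of the implementation), the tracker meta-configuration is nonempty on every trace of T if and only if every trace of T is exhibited by some atomic path; that is, (∀ t ∈ T, Track t ≠ ∅) ↔ (∀ t ∈ T, ∃ s', HasTrace s0 t s'). -/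
universe u v

lemma hasTrace_snoc_silent {State : Type u} {Label : Type v}
    {step : State → Option Label → State → Prop} {s s₁ s' : State} {t : List Label}
    (h : HasTrace step s t s₁) (hs : step s₁ none s') : HasTrace step s t s' := by
  induction h with
  | refl s => exact HasTrace.silent hs (HasTrace.refl _)
  | silent h₀ _ ih => exact HasTrace.silent h₀ (ih hs)
  | event h₀ _ ih => exact HasTrace.event h₀ (ih hs)

lemma hasTrace_trans_silent {State : Type u} {Label : Type v}
    {step : State → Option Label → State → Prop} {s s₁ s' : State} {t : List Label}
    (h : HasTrace step s t s₁)
    (h' : Relation.ReflTransGen (fun a b => step a none b) s₁ s') :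
    HasTrace step s t s' := by
  induction h' with
  | refl => exact h
  | tail _ hs ih => exact hasTrace_snoc_silent ih hs

lemma hasTrace_nil_iff {State : Type u} {Label : Type v}
    (step : State → Option Label → State → Prop) (s s' : State) :
    HasTrace step s ([] : List Label) s' ↔
      Relation.ReflTransGen (fun a b => step a none b) s s' := by
  constructor
  · intro h
    generalize ht : ([] : List Label) = t at h
    induction h with
    | refl => exact Relation.ReflTransGen.refl
    | silent hs _ ih => exact Relation.ReflTransGen.head hs (ih ht)
    | event _ _ _ => simp at ht
  · intro h
    exact hasTrace_trans_silent (HasTrace.refl s) h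

lemma hasTrace_snoc_event {State : Type u} {Label : Type v}
    {step : State → Option Label → State → Prop} {s s₁ s' : State} {l : Label}
    {t : List Label}
    (h : HasTrace step s t s₁) (hs : step s₁ (some l) s') :
    HasTrace step s (t ++ [l]) s' := by
  induction h with
  | refl s => exact HasTrace.event hs (HasTrace.refl _)
  | silent h₀ _ ih => exact HasTrace.silent h₀ (ih hs)
  | event h₀ _ ih => exact HasTrace.event h₀ (ih hs)

lemma hasTrace_snoc_decomp {State : Type u} {Label : Type v}
    {step : State → Option Label → State → Prop} {s s' : State} {l : Label}
    {t : List Label} (h : HasTrace step s (t ++ [l]) s') :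
    ∃ m m', HasTrace step s t m ∧ step m (some l) m' ∧
      Relation.ReflTransGen (fun a b => step a none b) m' s' := by
  generalize hu : t ++ [l] = u at h
  induction h generalizing t with
  | refl => simp at hu
  | silent hs _ ih =>
    obtain ⟨m, m', h1, h2, h3⟩ := ih hu
    exact ⟨m, m', HasTrace.silent hs h1, h2, h3⟩
  | event hs h' ih =>
    rename_i s s₁ s' l' t'
    cases t with
    | nil =>
      simp at hu
      obtain ⟨rfl, rfl⟩ := hu
      exact ⟨s, s₁, HasTrace.refl _, hs, (hasTrace_nil_iff _ _ _).1 h'⟩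
    | cons a t =>
      simp at hu
      obtain ⟨rfl, hu⟩ := hu
      obtain ⟨m, m', h1, h2, h3⟩ := ih hu
      exact ⟨m, m', HasTrace.event hs h1, h2, h3⟩

lemma track_mem_iff {State : Type u} {Label : Type v}
    (step : State → Option Label → State → Prop) (s0 : State) (t : List Label) :
    ∀ s', s' ∈ Track step s0 t ↔ HasTrace step s0 t s' := by
  induction t using List.reverseRecOn with
  | nil =>
    intro s'
    simp only [Track, List.reverse_nil, TrackRev, silentClosure,
      Set.mem_setOf_eq, Set.mem_singleton_iff]
    rw [hasTrace_nil_iff]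
    constructor
    · rintro ⟨s, rfl, h⟩; exact h
    · intro h; exact ⟨s0, rfl, h⟩
  | append_singleton t l ih =>
    intro s'
    simp only [Track, List.reverse_append, List.reverse_singleton,
      List.singleton_append, TrackRev, silentClosure, eventImage, Set.mem_setOf_eq]
    constructor
    · rintro ⟨m', ⟨m, hm, hstep⟩, hrt⟩
      exact hasTrace_trans_silent
        (hasTrace_snoc_event ((ih m).1 hm) hstep) hrt
    · intro h
      obtain ⟨m, m', h1, h2, h3⟩ := hasTrace_snoc_decomp h
      exact ⟨m', ⟨m, (ih m).2 h1, h2⟩, h3⟩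

/-- Main theorem (abstract form): the tracker is nonempty on every
trace of `T` iff every trace of `T` is exhibited by some atomic path. -/
theorem track_nonempty_iff_linearizable {State : Type u} {Label : Type v}
    (step : State → Option Label → State → Prop) (s0 : State)
    (T : Set (List Label)) :
    (∀ t ∈ T, Track step s0 t ≠ ∅) ↔ (∀ t ∈ T, ∃ s', HasTrace step s0 t s') := by
  constructor
  · intro h t ht
    obtain ⟨s', hs'⟩ := Set.nonempty_iff_ne_empty.2 (h t ht)
    exact ⟨s', (track_mem_iff step s0 t s').1 hs'⟩
  · intro h t ht
    obtain ⟨s', hs'⟩ := h t ht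
    exact Set.nonempty_iff_ne_empty.1 ⟨s', (track_mem_iff step s0 t s').2 hs'⟩
end

section
/- Partial tracker soundness (Theorem 'partial-tracker', abstract form): let P : List Label → Set State be any partial tracker, i.e. P [] ⊆ silentClosure {s0} and P (t ++ [l]) ⊆ silentClosure (eventImage l (P t)) for all t and l. If T is a set of finite traces with P t ≠ ∅ for every t ∈ T, then every t ∈ T is exhibited by some atomic path: ∀ t ∈ T, ∃ s', HasTrace s0 t s'. -/
universe u v

theorem HasTrace.snoc_silent {State : Type u} {Label : Type v}
    {step : State → Option Label → State → Prop} {s0 s s' : State} {t : List Label}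
    (h : HasTrace step s0 t s) (hs : step s none s') : HasTrace step s0 t s' := by
  induction h with
  | refl => exact HasTrace.silent hs (HasTrace.refl _)
  | silent h1 _ ih => exact HasTrace.silent h1 (ih hs)
  | event h1 _ ih => exact HasTrace.event h1 (ih hs)

theorem HasTrace.snoc_silents {State : Type u} {Label : Type v}
    {step : State → Option Label → State → Prop} {s0 s s' : State} {t : List Label}
    (h : HasTrace step s0 t s)
    (hs : Relation.ReflTransGen (fun a b => step a none b) s s') :
    HasTrace step s0 t s' := by
  induction hs with
  | refl => exact h
  | tail _ h2 ih => exact ih.snoc_silent h2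

theorem HasTrace.snoc_event {State : Type u} {Label : Type v}
    {step : State → Option Label → State → Prop} {s0 s s' : State} {l : Label} {t : List Label}
    (h : HasTrace step s0 t s) (hs : step s (some l) s') :
    HasTrace step s0 (t ++ [l]) s' := by
  induction h with
  | refl => exact HasTrace.event hs (HasTrace.refl _)
  | silent h1 _ ih => exact HasTrace.silent h1 (ih hs)
  | event h1 _ ih => exact HasTrace.event h1 (ih hs)

theorem trackRev_sound {State : Type u} {Label : Type v}
    (step : State → Option Label → State → Prop) (s0 : State) :
    ∀ (t : List Label) (s : State), s ∈ TrackRev step s0 t →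
      HasTrace step s0 t.reverse s := by
  intro t
  induction t with
  | nil =>
    rintro s ⟨s1, hs1, hrt⟩
    rw [Set.mem_singleton_iff] at hs1
    subst hs1
    exact (HasTrace.refl _).snoc_silents hrt
  | cons l t ih =>
    rintro s ⟨s1, ⟨s2, hs2, hstep⟩, hrt⟩
    simpa using (((ih s2 hs2).snoc_event hstep).snoc_silents hrt)

theorem P_sub_track {State : Type u} {Label : Type v}
    (step : State → Option Label → State → Prop) (s0 : State)
    (P : List Label → Set State)
    (hP0 : P [] ⊆ silentClosure step {s0})
    (hPstep : ∀ (t : List Label) (l : Label),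
      P (t ++ [l]) ⊆ silentClosure step (eventImage step l (P t)))
    (t : List Label) : P t ⊆ Track step s0 t := by
  induction t using List.reverseRecOn with
  | nil => exact hP0
  | append_singleton t l ih =>
    refine (hPstep t l).trans ?_
    intro s hs
    unfold Track at *
    simp only [List.reverse_append, List.reverse_singleton, List.singleton_append, TrackRev]
    obtain ⟨s1, ⟨s2, hs2, hstep⟩, hrt⟩ := hs
    exact ⟨s1, ⟨s2, ih hs2, hstep⟩, hrt⟩

/-- Partial tracker soundness. -/
theorem partial_tracker_sound {State : Type u} {Label : Type v}
    (step : State → Option Label → State → Prop) (s0 : State)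
    (P : List Label → Set State)
    (hP0 : P [] ⊆ silentClosure step {s0})
    (hPstep : ∀ (t : List Label) (l : Label),
      P (t ++ [l]) ⊆ silentClosure step (eventImage step l (P t)))
    (T : Set (List Label))
    (hT : ∀ t ∈ T, P t ≠ ∅) :
    ∀ t ∈ T, ∃ s', HasTrace step s0 t s' := by
  intro t ht
  obtain ⟨s, hs⟩ := Set.nonempty_iff_ne_empty.2 (hT t ht)
  have := trackRev_sound step s0 t.reverse s
    (P_sub_track step s0 P hP0 hPstep t hs)
  rw [List.reverse_reverse] at this
  exact ⟨s, this⟩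
end

section
/- Event step case of the main lemma (covers both the invocation and return cases): for every finite trace t and label l, the set of endpoints of atomic paths with trace t ++ [l] equals the silent closure of the l-successors of the endpoints of trace-t paths, i.e. Endpoints (t ++ [l]) = silentClosure (eventImage l (Endpoints t)). -/
universe u v

lemma hasTrace_nil_rtg {State : Type u} {Label : Type v}
    {step : State → Option Label → State → Prop} {a b : State}
    (h : HasTrace step a [] b) :
    Relation.ReflTransGen (fun x y => step x none y) a b := by
  generalize ht : ([] : List Label) = u at h
  induction h with
  | refl => exact Relation.ReflTransGen.refl
  | silent hs _ ih => exact Relation.ReflTransGen.head hs (ih ht)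
  | event _ _ _ => simp at ht

lemma hasTrace_append' {State : Type u} {Label : Type v}
    {step : State → Option Label → State → Prop} {a b c : State}
    {t1 t2 : List Label}
    (h1 : HasTrace step a t1 b) (h2 : HasTrace step b t2 c) :
    HasTrace step a (t1 ++ t2) c := by
  induction h1 with
  | refl => exact h2
  | silent hs _ ih => exact HasTrace.silent hs (ih h2)
  | event hs _ ih => exact HasTrace.event hs (ih h2)

lemma rtg_hasTrace {State : Type u} {Label : Type v}
    {step : State → Option Label → State → Prop} {a b : State}
    (h : Relation.ReflTransGen (fun x y => step x none y) a b) :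
    HasTrace step a [] b := by
  induction h with
  | refl => exact HasTrace.refl _
  | tail _ hs ih =>
    have := hasTrace_append' ih (HasTrace.silent hs (HasTrace.refl _))
    simpa using this

lemma hasTrace_snoc_dest {State : Type u} {Label : Type v}
    {step : State → Option Label → State → Prop} {a c : State}
    {u : List Label}
    (h : HasTrace step a u c) :
    ∀ t l, u = t ++ [l] →
      ∃ m m', HasTrace step a t m ∧ step m (some l) m' ∧
        Relation.ReflTransGen (fun x y => step x none y) m' c := by
  induction h with
  | refl => intro t l ht; exact absurd ht (by simp)
  | silent hs _ ih =>
    intro t l ht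
    obtain ⟨m, m', h1, h2, h3⟩ := ih t l ht
    exact ⟨m, m', HasTrace.silent hs h1, h2, h3⟩
  | @event s s₁ s' l0 t0 hs htr ih =>
    intro t l ht
    cases t with
    | nil =>
      simp at ht
      obtain ⟨rfl, rfl⟩ := ht
      exact ⟨s, s₁, HasTrace.refl _, hs, hasTrace_nil_rtg htr⟩
    | cons a' t' =>
      simp at ht
      obtain ⟨rfl, ht⟩ := ht
      obtain ⟨m, m', h1, h2, h3⟩ := ih t' l ht
      exact ⟨m, m', HasTrace.event hs h1, h2, h3⟩

/-- Event step case of the main lemma. -/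
theorem endpoints_append_event {State : Type u} {Label : Type v}
    (step : State → Option Label → State → Prop) (s0 : State)
    (t : List Label) (l : Label) :
    Endpoints step s0 (t ++ [l]) =
      silentClosure step (eventImage step l (Endpoints step s0 t)) := by
  ext s'
  constructor
  · intro h
    obtain ⟨m, m', h1, h2, h3⟩ := hasTrace_snoc_dest h t l rfl
    exact ⟨m', ⟨m, h1, h2⟩, h3⟩
  · rintro ⟨m', ⟨m, h1, h2⟩, h3⟩
    have h4 : HasTrace step m [l] s' := HasTrace.event h2 (rtg_hasTrace h3)
    exact hasTrace_append' h1 h4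
end
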